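/- Let a ∈ ℝ, t > 0, and let Y₁,…,Y_r be independent identically distributed real random variables such that P(|Y_j − a| > t) ≤ 1/3 for each j. Then the sample median M of Y₁,…,Y_r satisfies P(|M − a| > t) ≤ exp(−r/18). -/

import Mathlib

open MeasureTheory ProbabilityTheory

/-- The sample median of `v : Fin r → ℝ`: the `⌈r/2⌉`-th order statistic
(`⌈r/2⌉ = (r+1)/2` in natural-number arithmetic, and we index from zero). -/
noncomputable def sampleMedian {r : ℕ} (hr : 0 < r) (v : Fin r → ℝ) : ℝ :=
  v (Tuple.sort v ⟨(r + 1) / 2 - 1, by omega⟩)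

lemma median_count {r : ℕ} (hr : 0 < r) (v : Fin r → ℝ) (a t : ℝ)
    (h : t < |sampleMedian hr v - a|) :
    (r + 1) / 2 ≤ (Finset.univ.filter (fun j => t < |v j - a|)).card := by
  classical
  set k : ℕ := (r + 1) / 2 with hk
  have hk1 : 1 ≤ k := by omega
  have hkr : k - 1 < r := by omega
  set i : Fin r := ⟨k - 1, hkr⟩ with hi
  set σ := Tuple.sort v with hσ
  have hmono : Monotone (v ∘ σ) := Tuple.monotone_sort v
  have hM : sampleMedian hr v = v (σ i) := rfl
  rw [hM] at h
  rcases lt_abs.mp h with h1 | h1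
  · -- v (σ i) > a + t : use Ici
    have hcard : (Finset.Ici i).card ≤ (Finset.univ.filter (fun j => t < |v j - a|)).card := by
      apply Finset.card_le_card_of_injOn σ
      · intro p hp
        simp only [Finset.mem_coe, Finset.mem_Ici] at hp
        have hle : v (σ i) ≤ v (σ p) := hmono hp
        simp only [Finset.mem_coe, Finset.mem_filter, Finset.mem_univ, true_and]
        rw [lt_abs]; left; linarith
      · exact σ.injective.injOn
    rw [Fin.card_Ici] at hcard
    simp only [hi] at hcard
    omega
  · -- v (σ i) < a - t : use Iic
    have hcard : (Finset.Iic i).card ≤ (Finset.univ.filter (fun j => t < |v j - a|)).card := by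
      apply Finset.card_le_card_of_injOn σ
      · intro p hp
        simp only [Finset.mem_coe, Finset.mem_Iic] at hp
        have hle : v (σ p) ≤ v (σ i) := hmono hp
        simp only [Finset.mem_coe, Finset.mem_filter, Finset.mem_univ, true_and]
        rw [lt_abs]; right; linarith
      · exact σ.injective.injOn
    rw [Fin.card_Iic] at hcard
    simp only [hi] at hcard
    omega


lemma prod_indicator_biInter {Ω ι : Type*} [DecidableEq ι] (B : ι → Set Ω) (s : Finset ι) (ω : Ω) :
    ∏ j ∈ s, (B j).indicator (1 : Ω → ENNReal) ω = (⋂ j ∈ s, B j).indicator 1 ω := by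
  classical
  induction s using Finset.induction with
  | empty => simp
  | insert _ _ hns ih =>
    rename_i c s
    rw [Finset.prod_insert hns, ih, Finset.set_biInter_insert]
    rw [← Set.inter_indicator_mul]
    simp [Set.indicator_apply]

lemma numeric_ineq (r k : ℕ) (hrk : r ≤ 2 * k) :
    ((4:ℝ)/3) ^ r / 2 ^ k ≤ Real.exp (-(r : ℝ) / 18) := by
  have h2k : (0:ℝ) < 2 ^ k := by positivity
  rw [div_le_iff₀ h2k]
  set c : ℝ := 4 / 3 * Real.exp (1 / 18) with hc
  have hE : Real.exp (1/9) ≤ 9/8 := by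
    have h1 : (8:ℝ)/9 ≤ Real.exp (-(1/9)) := by
      have := Real.add_one_le_exp (-(1/9) : ℝ); linarith
    rw [Real.exp_neg] at h1
    have hp := Real.exp_pos (1/9)
    nlinarith [mul_pos hp hp, mul_inv_cancel₀ (ne_of_gt hp)]
  have hc2 : c ^ 2 ≤ 2 := by
    have h18 : Real.exp (1/18) ^ 2 = Real.exp (1/9) := by
      rw [← Real.exp_nat_mul]; norm_num
    rw [hc, mul_pow, h18]
    nlinarith
  have hcpos : 0 < c := by positivity
  have hsq2 : (0:ℝ) ≤ 2 := by norm_num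
  have hcsqrt : c ≤ Real.sqrt 2 := by
    nlinarith [Real.sq_sqrt hsq2, Real.sqrt_nonneg 2]
  have hone : (1:ℝ) ≤ Real.sqrt 2 := by
    nlinarith [Real.sq_sqrt hsq2, Real.sqrt_nonneg 2]
  have key : c ^ r ≤ 2 ^ k := by
    calc c ^ r ≤ Real.sqrt 2 ^ r := pow_le_pow_left₀ hcpos.le hcsqrt r
      _ ≤ Real.sqrt 2 ^ (2 * k) := pow_le_pow_right₀ hone hrk
      _ = 2 ^ k := by rw [pow_mul, Real.sq_sqrt hsq2]
  have hexp : Real.exp (1/18) ^ r = Real.exp ((r:ℝ)/18) := by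
    rw [← Real.exp_nat_mul]; ring_nf
  have heq : ((4:ℝ)/3) ^ r = c ^ r * Real.exp (-(r:ℝ) / 18) := by
    rw [hc, mul_pow, hexp, mul_assoc, ← Real.exp_add]
    ring_nf
    norm_num
  rw [heq, mul_comm (Real.exp _) ((2:ℝ) ^ k)]
  exact mul_le_mul_of_nonneg_right key (Real.exp_pos _).le


/-- Median amplification: if `Y₁,…,Y_r` are i.i.d. real random variables with
`P(|Y_j - a| > t) ≤ 1/3` for each `j`, then the sample median `M` satisfies
`P(|M - a| > t) ≤ exp (-r/18)`. -/
theorem median_amplification {Ω : Type*} [MeasurableSpace Ω]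
    (μ : Measure Ω) [IsProbabilityMeasure μ]
    (a t : ℝ) (ht : 0 < t) (r : ℕ) (hr : 0 < r)
    (Y : Fin r → Ω → ℝ) (hYmeas : ∀ j, Measurable (Y j))
    (hYindep : iIndepFun Y μ)
    (hYident : ∀ i j, IdentDistrib (Y i) (Y j) μ μ)
    (hYtail : ∀ j, μ {ω | t < |Y j ω - a|} ≤ 1 / 3) :
    μ {ω | t < |sampleMedian hr (fun j => Y j ω) - a|}
      ≤ ENNReal.ofReal (Real.exp (-(r : ℝ) / 18)) := by
  classical
  set k : ℕ := (r + 1) / 2 with hk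
  set B : Fin r → Set Ω := fun j => {ω | t < |Y j ω - a|} with hB
  have hAmeas : MeasurableSet {x : ℝ | t < |x - a|} :=
    measurableSet_lt measurable_const ((measurable_id.sub_const a).abs)
  have hBmeas : ∀ j, MeasurableSet (B j) := fun j => (hYmeas j) hAmeas
  set f : Ω → ENNReal := fun ω => ∏ j, ((B j).indicator 1 ω + 1) with hf
  have hfmeas : Measurable f := by
    apply Finset.measurable_prod
    intro j _
    exact (measurable_one.indicator (hBmeas j)).add measurable_const
  -- inclusion into the level set of f
  have hsub : {ω | t < |sampleMedian hr (fun j => Y j ω) - a|}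
      ⊆ {ω | (2 : ENNReal) ^ k ≤ f ω} := by
    intro ω hω
    have hcnt := median_count hr (fun j => Y j ω) a t hω
    set S := Finset.univ.filter (fun j => t < |(fun j => Y j ω) j - a|) with hS
    have h1 : (2 : ENNReal) ^ S.card = ∏ j ∈ S, ((B j).indicator 1 ω + 1) := by
      rw [Finset.prod_congr rfl (g := fun _ => (2 : ENNReal)) ?_, Finset.prod_const]
      intro j hj
      have hmem : ω ∈ B j := (Finset.mem_filter.mp hj).2
      simp [Set.indicator_of_mem hmem, one_add_one_eq_two]
    show (2 : ENNReal) ^ k ≤ f ω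
    calc (2 : ENNReal) ^ k ≤ 2 ^ S.card := pow_le_pow_right₀ one_le_two hcnt
      _ = ∏ j ∈ S, ((B j).indicator 1 ω + 1) := h1
      _ ≤ f ω := Finset.prod_le_prod_of_subset_of_one_le' (Finset.subset_univ S)
          (fun j _ _ => le_add_self)
  -- integral bound
  have hint : ∫⁻ ω, f ω ∂μ ≤ (1/3 + 1 : ENNReal) ^ r := by
    have hfeq : ∀ ω, f ω = ∑ s ∈ (Finset.univ : Finset (Fin r)).powerset,
        ∏ j ∈ s, (B j).indicator 1 ω := by
      intro ω
      show ∏ j, ((B j).indicator 1 ω + 1) = _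
      rw [Finset.prod_add]
      simp
    calc ∫⁻ ω, f ω ∂μ
        = ∑ s ∈ (Finset.univ : Finset (Fin r)).powerset, μ (⋂ j ∈ s, B j) := by
          simp_rw [hfeq]
          rw [lintegral_finset_sum]
          · refine Finset.sum_congr rfl fun s _ => ?_
            simp_rw [prod_indicator_biInter]
            rw [lintegral_indicator_one (Finset.measurableSet_biInter s (fun j _ => hBmeas j))]
          · intro s _
            exact Finset.measurable_prod _ fun j _ => measurable_one.indicator (hBmeas j)
      _ = ∑ s ∈ (Finset.univ : Finset (Fin r)).powerset, ∏ j ∈ s, μ (B j) := by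
          refine Finset.sum_congr rfl fun s _ => ?_
          exact hYindep.meas_biInter (fun i _ => ⟨{x | t < |x - a|}, hAmeas, rfl⟩)
      _ ≤ ∑ s ∈ (Finset.univ : Finset (Fin r)).powerset, ∏ j ∈ s, (1/3 : ENNReal) := by
          refine Finset.sum_le_sum fun s _ => ?_
          exact Finset.prod_le_prod' fun j _ => hYtail j
      _ = (1/3 + 1 : ENNReal) ^ r := by
          simp only [Finset.prod_const]
          have h := Finset.prod_add (fun _ : Fin r => (1/3 : ENNReal)) (fun _ => 1) Finset.univ
          simp only [Finset.prod_const, Finset.card_univ, Fintype.card_fin, mul_one,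
            Finset.prod_const_one, one_pow] at h
          exact h.symm
  -- Markov
  have h2ne0 : ((2 : ENNReal) ^ k) ≠ 0 := by positivity
  have h2netop : ((2 : ENNReal) ^ k) ≠ ⊤ := by
    exact ENNReal.pow_ne_top (by norm_num)
  have hmar := mul_meas_ge_le_lintegral₀ (μ := μ) hfmeas.aemeasurable ((2 : ENNReal) ^ k)
  have hlev : μ {ω | (2 : ENNReal) ^ k ≤ f ω} ≤ (1/3 + 1 : ENNReal) ^ r / 2 ^ k := by
    rw [ENNReal.le_div_iff_mul_le (Or.inl h2ne0) (Or.inl h2netop)]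
    rw [mul_comm]
    exact hmar.trans hint
  refine (measure_mono hsub).trans (hlev.trans ?_)
  -- numeric conversion
  have h43 : (1/3 + 1 : ENNReal) = ENNReal.ofReal (4/3) := by
    rw [show (4:ℝ)/3 = 1/3 + 1 by norm_num,
      ENNReal.ofReal_add (by norm_num) (by norm_num), ENNReal.ofReal_one]
    congr 1
    rw [ENNReal.ofReal_div_of_pos (by norm_num), ENNReal.ofReal_one]
    norm_num [ENNReal.ofReal_ofNat]
  have h2 : ((2 : ENNReal) ^ k) = ENNReal.ofReal ((2:ℝ) ^ k) := by
    rw [ENNReal.ofReal_pow (by norm_num), ENNReal.ofReal_ofNat]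
  rw [h43, h2, ← ENNReal.ofReal_pow (by norm_num), ← ENNReal.ofReal_div_of_pos (by positivity)]
  exact ENNReal.ofReal_le_ofReal (numeric_ineq r k (by omega))
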